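/- Let ν be a probability measure on SL(2,ℝ) and let G_ν be the smallest closed subgroup of SL(2,ℝ) containing supp ν. Assume there is no finite non-empty subset L of ℙ¹(ℝ) such that M·L = L for all M ∈ G_ν. Then every ν-invariant probability measure m on ℙ¹(ℝ) is non-atomic, i.e. m({v}) = 0 for every v ∈ ℙ¹(ℝ). -/

import Mathlib

open MeasureTheory Filter Topology

noncomputable section

/-- The group `SL(2,ℝ)`. -/
abbrev SL2 := Matrix.SpecialLinearGroup (Fin 2) ℝ

instance : TopologicalSpace SL2 := instTopologicalSpaceSubtype
instance : MeasurableSpace SL2 := borel SL2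

/-- The real projective line `ℙ¹(ℝ)`, the projectivization of `ℝ² \ {0}`. -/
abbrev P1 := Projectivization ℝ (EuclideanSpace ℝ (Fin 2))

instance : TopologicalSpace P1 := instTopologicalSpaceQuotient
instance : MeasurableSpace P1 := borel P1

lemma sl2_inj (M : SL2) :
    Function.Injective (Matrix.toEuclideanCLM (𝕜 := ℝ) (M : Matrix (Fin 2) (Fin 2) ℝ)) := by
  intro x y h
  have h2 := congrArg (fun v => Matrix.toEuclideanCLM (𝕜 := ℝ)
    ((M⁻¹ : SL2) : Matrix (Fin 2) (Fin 2) ℝ) v) h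
  simpa [← ContinuousLinearMap.comp_apply, ← ContinuousLinearMap.mul_def, ← map_mul,
    Matrix.SpecialLinearGroup.coe_inv, Matrix.adjugate_mul, M.prop, one_smul] using h2

/-- The induced action of `M ∈ SL(2,ℝ)` on the real projective line. -/
def projAct (M : SL2) (x : P1) : P1 :=
  Projectivization.map
    ((Matrix.toEuclideanCLM (𝕜 := ℝ) (M : Matrix (Fin 2) (Fin 2) ℝ)) : _ →ₗ[ℝ] _)
    (sl2_inj M) x

/-- The topological support of a measure. -/
def msupp {X : Type*} [TopologicalSpace X] [MeasurableSpace X] (ν : Measure X) : Set X :=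
  {x | ∀ U ∈ nhds x, ν U ≠ 0}

/-- The smallest closed subgroup of `SL(2,ℝ)` containing the support of `ν`: the topological
closure of the subgroup generated by `supp ν`. -/
def Gnu (ν : Measure SL2) : Set SL2 := closure (Subgroup.closure (msupp ν) : Set SL2)

section Helpers

open scoped LinearAlgebra.Projectivization Matrix

abbrev E2 := EuclideanSpace ℝ (Fin 2)

/-- The quotient map from nonzero vectors to `P1`. -/
def pq (w : {v : E2 // v ≠ 0}) : P1 := Projectivization.mk' ℝ w

lemma pq_quot : IsQuotientMap pq := isQuotientMap_quot_mk

lemma pq_cont : Continuous pq := pq_quot.continuous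

lemma pq_surj : Function.Surjective pq := pq_quot.surjective

/-- Scalar multiplication by a unit, as a self-map of nonzero vectors. -/
def usmul (a : ℝˣ) (w : {v : E2 // v ≠ 0}) : {v : E2 // v ≠ 0} :=
  ⟨(a : ℝ) • w.1, smul_ne_zero a.ne_zero w.2⟩

lemma usmul_cont (a : ℝˣ) : Continuous (usmul a) :=
  ((continuous_const (y := (a : ℝ))).smul continuous_subtype_val).subtype_mk _

lemma pq_usmul (a : ℝˣ) (w : {v : E2 // v ≠ 0}) : pq (usmul a w) = pq w := by
  simp only [pq, Projectivization.mk'_eq_mk]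
  exact (Projectivization.mk_eq_mk_iff ℝ _ _ _ _).2 ⟨a, rfl⟩

lemma pq_open : IsOpenMap pq := by
  intro U hU
  rw [← pq_quot.isOpen_preimage]
  have hkey : pq ⁻¹' (pq '' U) = ⋃ a : ℝˣ, usmul a ⁻¹' U := by
    ext v
    simp only [Set.mem_preimage, Set.mem_image, Set.mem_iUnion]
    constructor
    · rintro ⟨u, hu, huv⟩
      have : pq u = pq v := huv
      simp only [pq, Projectivization.mk'_eq_mk] at this
      obtain ⟨a, ha⟩ := (Projectivization.mk_eq_mk_iff ℝ _ _ u.2 v.2).1 this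
      refine ⟨a, ?_⟩
      have : usmul a v = u := Subtype.ext ha
      rw [this]; exact hu
    · rintro ⟨a, ha⟩
      exact ⟨usmul a v, ha, pq_usmul a v⟩
  rw [hkey]
  exact isOpen_iUnion fun a => (usmul_cont a).isOpen_preimage U hU

/-- The raw "projection matrix" map on vectors. -/
def Phi0 (w : E2) : Fin 2 → Fin 2 → ℝ :=
  (‖w‖ ^ 2)⁻¹ • fun i j => w i * w j

lemma Phi0_smul {w : E2} (hw : w ≠ 0) {c : ℝ} (hc : c ≠ 0) : Phi0 (c • w) = Phi0 w := by
  have hwn : ‖w‖ ≠ 0 := norm_ne_zero_iff.2 hw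
  ext i j
  simp only [Phi0, Pi.smul_apply, norm_smul, PiLp.smul_apply, smul_eq_mul,
    mul_pow, Real.norm_eq_abs, sq_abs]
  field_simp

/-- The continuous injection of `P1` into `2×2` matrices. -/
def phi : P1 → (Fin 2 → Fin 2 → ℝ) :=
  Projectivization.lift (fun w => Phi0 w.1) <| by
    rintro ⟨a, ha⟩ ⟨b, hb⟩ t h
    have ht : t ≠ 0 := by rintro rfl; simp at h; exact ha h
    simp only at h ⊢
    rw [h, Phi0_smul hb ht]

lemma phi_pq (w : {v : E2 // v ≠ 0}) : phi (pq w) = Phi0 w.1 := rfl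

lemma phi_cont : Continuous phi := by
  rw [pq_quot.continuous_iff]
  have h1 : Continuous fun w : {v : E2 // v ≠ 0} => (‖w.1‖ ^ 2)⁻¹ :=
    ((continuous_subtype_val.norm.pow 2).inv₀ (by
      intro w
      exact pow_ne_zero 2 (norm_ne_zero_iff.2 w.2)))
  have h2 : Continuous fun w : {v : E2 // v ≠ 0} => fun i j => w.1 i * w.1 j := by
    refine continuous_pi fun i => continuous_pi fun j => Continuous.mul ?_ ?_
    · exact (EuclideanSpace.proj i).continuous.comp continuous_subtype_val
    · exact (EuclideanSpace.proj j).continuous.comp continuous_subtype_val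
  exact h1.smul h2

lemma phi_inj : Function.Injective phi := by
  intro x y h
  induction x using Projectivization.ind with | h v hv =>
  induction y using Projectivization.ind with | h w hw =>
  have hvn : ‖v‖ ≠ 0 := norm_ne_zero_iff.2 hv
  have hwn : ‖w‖ ≠ 0 := norm_ne_zero_iff.2 hw
  rw [Projectivization.mk_eq_mk_iff']
  have hmat : ∀ i j, (‖v‖ ^ 2)⁻¹ * (v i * v j) = (‖w‖ ^ 2)⁻¹ * (w i * w j) := by
    intro i j
    have := congrFun (congrFun (show Phi0 v = Phi0 w from h) i) j
    simpa [Phi0] using this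
  obtain ⟨i, hi⟩ : ∃ i, v i ≠ 0 := by
    by_contra hcon
    push_neg at hcon
    exact hv (by ext i; exact hcon i)
  have hwi : w i ≠ 0 := by
    intro hwi0
    have h2 := hmat i i
    rw [hwi0] at h2
    simp only [mul_zero, zero_mul] at h2
    have h4 : (‖v‖ ^ 2)⁻¹ ≠ 0 := inv_ne_zero (pow_ne_zero 2 hvn)
    have h3 : v i * v i = 0 := (mul_eq_zero.1 h2).resolve_left h4
    exact hi (mul_self_eq_zero.1 h3)
  refine ⟨w i * ‖v‖ ^ 2 / (v i * ‖w‖ ^ 2), ?_⟩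
  ext j
  have hij := hmat i j
  simp only [PiLp.smul_apply, smul_eq_mul]
  field_simp
  field_simp at hij
  linear_combination -hij

instance : CompactSpace P1 := by
  constructor
  have hmap : Continuous fun x : Metric.sphere (0 : E2) 1 =>
      pq ⟨x.1, fun h0 => by simpa [h0] using x.2⟩ :=
    pq_cont.comp (continuous_subtype_val.subtype_mk _)
  have hsurj : Function.Surjective fun x : Metric.sphere (0 : E2) 1 =>
      pq ⟨x.1, fun h0 => by simpa [h0] using x.2⟩ := by
    intro p
    obtain ⟨⟨v, hv⟩, rfl⟩ := pq_surj p
    have hvn : ‖v‖ ≠ 0 := norm_ne_zero_iff.2 hv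
    refine ⟨⟨‖v‖⁻¹ • v, by simp [norm_smul, abs_of_nonneg (norm_nonneg v), inv_mul_cancel₀ hvn]⟩, ?_⟩
    simp only [pq, Projectivization.mk'_eq_mk]
    exact (Projectivization.mk_eq_mk_iff' ℝ _ _ _ _).2 ⟨‖v‖⁻¹, rfl⟩
  rw [← Set.range_eq_univ.2 hsurj]
  exact isCompact_range hmap

lemma phi_closedEmb : Topology.IsClosedEmbedding phi :=
  phi_cont.isClosedEmbedding phi_inj

instance : T2Space P1 := phi_closedEmb.isEmbedding.t2Space

instance : SecondCountableTopology P1 := phi_closedEmb.isEmbedding.secondCountableTopology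

instance : BorelSpace P1 := ⟨rfl⟩
instance : BorelSpace SL2 := ⟨rfl⟩

lemma toCLM_apply_cont : Continuous fun p : SL2 × {v : E2 // v ≠ 0} =>
    (Matrix.toEuclideanCLM (𝕜 := ℝ) (p.1 : Matrix (Fin 2) (Fin 2) ℝ)) p.2.1 := by
  have heq : (fun p : SL2 × {v : E2 // v ≠ 0} =>
      (Matrix.toEuclideanCLM (𝕜 := ℝ) (p.1 : Matrix (Fin 2) (Fin 2) ℝ)) p.2.1)
      = fun p => (WithLp.equiv 2 (Fin 2 → ℝ)).symm
        ((p.1 : Matrix (Fin 2) (Fin 2) ℝ) *ᵥ (WithLp.equiv 2 (Fin 2 → ℝ) p.2.1)) := by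
    funext p
    rfl
  rw [heq]
  refine (PiLp.continuous_toLp 2 fun _ : Fin 2 => ℝ).comp ?_
  refine continuous_pi fun i => ?_
  simp only [Matrix.mulVec, dotProduct]
  refine continuous_finset_sum _ fun j _ => Continuous.mul ?_ ?_
  · exact ((continuous_apply j).comp ((continuous_apply i).comp
      ((continuous_induced_dom : Continuous fun M : SL2 => (M : Matrix (Fin 2) (Fin 2) ℝ)).comp continuous_fst)))
  · exact ((continuous_apply j).comp
      ((PiLp.continuous_ofLp 2 fun _ : Fin 2 => ℝ).comp
        (continuous_subtype_val.comp continuous_snd)))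

lemma cont_projAct : Continuous fun p : SL2 × P1 => projAct p.1 p.2 := by
  have hq : IsQuotientMap (Prod.map (id : SL2 → SL2) pq) :=
    (IsOpenMap.id.prodMap pq_open).isQuotientMap (continuous_id.prodMap pq_cont)
      (Function.surjective_id.prodMap pq_surj)
  rw [hq.continuous_iff]
  have heq : (fun p : SL2 × P1 => projAct p.1 p.2) ∘ Prod.map id pq
      = fun p : SL2 × {v : E2 // v ≠ 0} =>
        pq ⟨Matrix.toEuclideanCLM (𝕜 := ℝ) (p.1 : Matrix (Fin 2) (Fin 2) ℝ) p.2.1,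
          fun h0 => p.2.2 (sl2_inj p.1 (by simpa using h0))⟩ := by
    funext p
    show projAct p.1 (pq p.2) = _
    simp only [pq, Projectivization.mk'_eq_mk, projAct, Projectivization.map_mk]
    rfl
  rw [heq]
  exact pq_cont.comp (toCLM_apply_cont.subtype_mk _)

lemma cont_projAct_right (M : SL2) : Continuous fun x : P1 => projAct M x := by
  change Continuous ((fun p : SL2 × P1 => projAct p.1 p.2) ∘ fun x => (M, x))
  exact cont_projAct.comp (continuous_const.prodMk continuous_id)

lemma cont_projAct_left (x : P1) : Continuous fun M : SL2 => projAct M x := by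
  change Continuous ((fun p : SL2 × P1 => projAct p.1 p.2) ∘ fun M => (M, x))
  exact cont_projAct.comp (continuous_id.prodMk continuous_const)

lemma projAct_one (x : P1) : projAct 1 x = x := by
  induction x using Projectivization.ind with | h v hv =>
  unfold projAct
  rw [Projectivization.map_mk]
  exact (Projectivization.mk_eq_mk_iff' ℝ _ _ _ _).2 ⟨1, by simp⟩

lemma projAct_mul (M N : SL2) (x : P1) : projAct (M * N) x = projAct M (projAct N x) := by
  induction x using Projectivization.ind with | h v hv =>
  unfold projAct
  rw [Projectivization.map_mk, Projectivization.map_mk, Projectivization.map_mk]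
  exact (Projectivization.mk_eq_mk_iff' ℝ _ _ _ _).2 ⟨1, by simp⟩

lemma projAct_inv_left (M : SL2) (x : P1) : projAct M⁻¹ (projAct M x) = x := by
  rw [← projAct_mul, inv_mul_cancel, projAct_one]

lemma projAct_inv_right (M : SL2) (x : P1) : projAct M (projAct M⁻¹ x) = x := by
  rw [← projAct_mul, mul_inv_cancel, projAct_one]

lemma cont_inv_sl2 : Continuous fun M : SL2 => M⁻¹ := by
  refine continuous_induced_rng.2 ?_
  show Continuous fun M : SL2 => ((M⁻¹ : SL2) : Matrix (Fin 2) (Fin 2) ℝ)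
  simp only [Matrix.SpecialLinearGroup.coe_inv]
  exact Continuous.matrix_adjugate continuous_subtype_val

lemma projAct_eq_iff (M : SL2) (x v : P1) : projAct M x = v ↔ x = projAct M⁻¹ v := by
  constructor
  · rintro rfl; rw [projAct_inv_left]
  · rintro rfl; rw [projAct_inv_right]

/-- The subgroup of `SL2` stabilizing a set `S ⊆ P1`. -/
def Hsub (S : Set P1) : Subgroup SL2 where
  carrier := {M | (∀ w ∈ S, projAct M w ∈ S) ∧ (∀ w ∈ S, projAct M⁻¹ w ∈ S)}
  one_mem' := by
    constructor <;> intro w hw <;> simp only [inv_one, projAct_one] <;> exact hw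
  mul_mem' := by
    rintro M N ⟨hM1, hM2⟩ ⟨hN1, hN2⟩
    constructor
    · intro w hw
      rw [projAct_mul]
      exact hM1 _ (hN1 _ hw)
    · intro w hw
      rw [mul_inv_rev, projAct_mul]
      exact hN2 _ (hM2 _ hw)
  inv_mem' := by
    rintro M ⟨hM1, hM2⟩
    refine ⟨hM2, ?_⟩
    simpa only [inv_inv] using hM1

lemma Hsub_isClosed (S : Set P1) (hS : S.Finite) : IsClosed ((Hsub S : Subgroup SL2) : Set SL2) := by
  have hScl : IsClosed S := hS.isClosed
  have h1 : ∀ w : P1, IsClosed {M : SL2 | projAct M w ∈ S} :=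
    fun w => hScl.preimage (cont_projAct_left w)
  have h2 : ∀ w : P1, IsClosed {M : SL2 | projAct M⁻¹ w ∈ S} :=
    fun w => (hScl.preimage (cont_projAct_left w)).preimage cont_inv_sl2
  have : ((Hsub S : Subgroup SL2) : Set SL2)
      = (⋂ w ∈ S, {M : SL2 | projAct M w ∈ S}) ∩ ⋂ w ∈ S, {M : SL2 | projAct M⁻¹ w ∈ S} := by
    ext M
    simp [Hsub, Set.mem_iInter]
  rw [this]
  exact ((isClosed_biInter fun w _ => h1 w).inter (isClosed_biInter fun w _ => h2 w))

end Helpers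

/-- If there is no finite non-empty subset of `ℙ¹(ℝ)` invariant under all of `G_ν`, then
every `ν`-invariant probability measure `m` on `ℙ¹(ℝ)` (invariance being tested against all
bounded continuous functions) is non-atomic. -/
theorem invariant_measure_nonatomic
    (ν : Measure SL2) [IsProbabilityMeasure ν]
    (hinv : ¬ ∃ L : Set P1, L.Finite ∧ L.Nonempty ∧ ∀ M ∈ Gnu ν, projAct M '' L = L)
    (m : Measure P1) [IsProbabilityMeasure m]
    (hm : ∀ f : P1 → ℝ, Continuous f → (∃ C : ℝ, ∀ x, |f x| ≤ C) →
      ∫ x, f x ∂m = ∫ x, (∫ M, f (projAct M x) ∂ν) ∂m) :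
    ∀ v : P1, m {v} = 0 := by
  classical
  have hEmeas : ∀ v : P1, MeasurableSet {p : P1 × SL2 | projAct p.2 p.1 = v} := by
    intro v
    have : IsClosed {p : P1 × SL2 | projAct p.2 p.1 = v} :=
      isClosed_singleton.preimage (cont_projAct.comp (continuous_snd.prodMk continuous_fst))
    exact this.measurableSet
  have hAmeas : ∀ (v x : P1), MeasurableSet {M : SL2 | projAct M x = v} :=
    fun v x => (isClosed_singleton.preimage (cont_projAct_left x)).measurableSet
  have hsecν : ∀ (v x : P1), ν {M | projAct M x = v}
      = ∫⁻ M, Set.indicator {p : P1 × SL2 | projAct p.2 p.1 = v} 1 (x, M) ∂ν := by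
    intro v x
    rw [show (fun M => Set.indicator {p : P1 × SL2 | projAct p.2 p.1 = v}
          (1 : P1 × SL2 → ENNReal) (x, M))
        = fun M => Set.indicator {M : SL2 | projAct M x = v} (1 : SL2 → ENNReal) M from
      funext fun M => by simp [Set.indicator_apply]]
    rw [lintegral_indicator_one (hAmeas v x)]
  have hsecm : ∀ (v : P1) (M : SL2), m {x | projAct M x = v}
      = ∫⁻ x, Set.indicator {p : P1 × SL2 | projAct p.2 p.1 = v} 1 (x, M) ∂m := by
    intro v M
    have hxmeas : MeasurableSet {x : P1 | projAct M x = v} :=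
      (isClosed_singleton.preimage (cont_projAct_right M)).measurableSet
    rw [show (fun x => Set.indicator {p : P1 × SL2 | projAct p.2 p.1 = v}
          (1 : P1 × SL2 → ENNReal) (x, M))
        = fun x => Set.indicator {x : P1 | projAct M x = v} (1 : P1 → ENNReal) x from
      funext fun x => by simp [Set.indicator_apply]]
    rw [lintegral_indicator_one hxmeas]
  have hGmeas : ∀ v : P1, Measurable fun M : SL2 => m {x | projAct M x = v} := by
    intro v
    have h := (measurable_one.indicator (hEmeas v)).lintegral_prod_left'
      (μ := m)
    simp only [hsecm v]
    exact h
  have hsetinv : ∀ (v : P1) (M : SL2), {x : P1 | projAct M x = v} = {projAct M⁻¹ v} := by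
    intro v M
    ext x
    rw [Set.mem_setOf_eq, Set.mem_singleton_iff, projAct_eq_iff]
  have key : ∀ v : P1, m {v} = ∫⁻ M, m {x | projAct M x = v} ∂ν := by
    intro v
    set f : ℕ → P1 → ℝ := fun n x => max 0 (1 - (n : ℝ) * dist (phi x) (phi v)) with hfdef
    have hfc : ∀ n, Continuous (f n) := fun n =>
      continuous_const.max (continuous_const.sub
        (continuous_const.mul (phi_cont.dist continuous_const)))
    have hfb : ∀ n x, |f n x| ≤ 1 := by
      intro n x
      rw [abs_le]
      constructor
      · have := le_max_left (0 : ℝ) (1 - (n : ℝ) * dist (phi x) (phi v))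
        simp only [hfdef]
        linarith
      · refine max_le (by norm_num) ?_
        have : 0 ≤ (n : ℝ) * dist (phi x) (phi v) :=
          mul_nonneg (Nat.cast_nonneg n) dist_nonneg
        linarith
    have hnorm : ∀ n x, ‖f n x‖ ≤ 1 := fun n x => by
      rw [Real.norm_eq_abs]; exact hfb n x
    have hlim : ∀ x : P1, Tendsto (fun n => f n x) atTop
        (𝓝 (Set.indicator {v} (1 : P1 → ℝ) x)) := by
      intro x
      by_cases hx : x = v
      · subst hx
        have hfx : ∀ n : ℕ, f n x = 1 := by
          intro n; simp [hfdef, dist_self]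
        have hone : ({x} : Set P1).indicator (1 : P1 → ℝ) x = 1 := by simp
        rw [hone]
        simp only [hfx]
        exact tendsto_const_nhds
      · have hdx : 0 < dist (phi x) (phi v) := dist_pos.2 fun hh => hx (phi_inj hh)
        rw [Set.indicator_of_notMem (by simpa using hx)]
        obtain ⟨N, hN⟩ := exists_nat_ge (1 / dist (phi x) (phi v))
        refine Filter.Tendsto.congr' ?_ (tendsto_const_nhds (x := (0:ℝ)))
        filter_upwards [eventually_ge_atTop N] with n hn
        have h1 : 1 / dist (phi x) (phi v) ≤ (n : ℝ) := le_trans hN (by exact_mod_cast hn)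
        have h2 : 1 ≤ (n : ℝ) * dist (phi x) (phi v) := by
          rw [div_le_iff₀ hdx] at h1
          linarith
        simp only [hfdef]
        rw [max_eq_left (by linarith)]
    have h1 : Tendsto (fun n => ∫ x, f n x ∂m) atTop (𝓝 ((m {v}).toReal)) := by
      have h := tendsto_integral_of_dominated_convergence (μ := m)
        (F := f) (f := Set.indicator {v} (1 : P1 → ℝ)) (fun _ => (1:ℝ))
        (fun n => (hfc n).aestronglyMeasurable)
        (integrable_const 1)
        (fun n => Filter.Eventually.of_forall fun x => hnorm n x)
        (Filter.Eventually.of_forall hlim)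
      rwa [integral_indicator_one (measurableSet_singleton v)] at h
    have h2 : ∀ x : P1, Tendsto (fun n => ∫ M, f n (projAct M x) ∂ν) atTop
        (𝓝 ((ν {M | projAct M x = v}).toReal)) := by
      intro x
      have h := tendsto_integral_of_dominated_convergence (μ := ν)
        (F := fun n M => f n (projAct M x))
        (f := Set.indicator {M : SL2 | projAct M x = v} (1 : SL2 → ℝ)) (fun _ => (1:ℝ))
        (fun n => ((hfc n).comp (cont_projAct_left x)).aestronglyMeasurable)
        (integrable_const 1)
        (fun n => Filter.Eventually.of_forall fun M => hnorm n _)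
        (Filter.Eventually.of_forall fun M => by
          simpa [Set.indicator_apply] using hlim (projAct M x))
      rwa [integral_indicator_one (hAmeas v x)] at h
    have h3 : Tendsto (fun n => ∫ x, (∫ M, f n (projAct M x) ∂ν) ∂m) atTop
        (𝓝 (∫ x, (ν {M | projAct M x = v}).toReal ∂m)) := by
      refine tendsto_integral_of_dominated_convergence (fun _ => (1:ℝ)) ?_
        (integrable_const 1) ?_ (Filter.Eventually.of_forall h2)
      · intro n
        have hj : StronglyMeasurable fun p : P1 × SL2 => f n (projAct p.2 p.1) :=
          ((hfc n).comp (cont_projAct.comp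
            (continuous_snd.prodMk continuous_fst))).stronglyMeasurable
        exact hj.integral_prod_right'.aestronglyMeasurable
      · intro n
        refine Filter.Eventually.of_forall fun x => ?_
        have h := norm_integral_le_of_norm_le_const (μ := ν)
          (f := fun M => f n (projAct M x)) (C := 1)
          (Filter.Eventually.of_forall fun M => hnorm n _)
        simpa using h
    have heqn : ∀ n, ∫ x, f n x ∂m = ∫ x, (∫ M, f n (projAct M x) ∂ν) ∂m :=
      fun n => hm (f n) (hfc n) ⟨1, hfb n⟩
    have hkey1 : (m {v}).toReal = ∫ x, (ν {M | projAct M x = v}).toReal ∂m := by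
      refine tendsto_nhds_unique ?_ h3
      simpa only [heqn] using h1
    have hνmeas : Measurable fun x : P1 => ν {M | projAct M x = v} := by
      have h := (measurable_one.indicator (hEmeas v)).lintegral_prod_right' (ν := ν)
      simp only [hsecν v]
      exact h
    have hint : ∫ x, (ν {M | projAct M x = v}).toReal ∂m
        = (∫⁻ x, ν {M | projAct M x = v} ∂m).toReal :=
      integral_toReal hνmeas.aemeasurable
        (Filter.Eventually.of_forall fun x => measure_lt_top ν _)
    have hswap : ∫⁻ x, ν {M | projAct M x = v} ∂m = ∫⁻ M, m {x | projAct M x = v} ∂ν := by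
      calc ∫⁻ x, ν {M | projAct M x = v} ∂m
          = ∫⁻ x, ∫⁻ M, Set.indicator {p : P1 × SL2 | projAct p.2 p.1 = v} 1 (x, M) ∂ν ∂m :=
            lintegral_congr fun x => hsecν v x
        _ = ∫⁻ M, ∫⁻ x, Set.indicator {p : P1 × SL2 | projAct p.2 p.1 = v} 1 (x, M) ∂m ∂ν :=
            lintegral_lintegral_swap (measurable_one.indicator (hEmeas v)).aemeasurable
        _ = ∫⁻ M, m {x | projAct M x = v} ∂ν := lintegral_congr fun M => (hsecm v M).symm
    have hfin : ∫⁻ M, m {x | projAct M x = v} ∂ν ≠ ⊤ := by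
      refine ne_top_of_le_ne_top (by simp : (1:ENNReal) ≠ ⊤) ?_
      calc ∫⁻ M, m {x | projAct M x = v} ∂ν ≤ ∫⁻ _, 1 ∂ν :=
            lintegral_mono fun M => prob_le_one
        _ = 1 := by simp
    refine (ENNReal.toReal_eq_toReal_iff' (measure_ne_top m _) hfin).1 ?_
    rw [hkey1, hint, hswap]
  -- Main argument: suppose there is an atom.
  intro v
  by_contra hv0
  set α : ENNReal := ⨆ w : P1, m {w} with hαdef
  have hle : ∀ w : P1, m {w} ≤ α := fun w => le_iSup (fun w : P1 => m {w}) w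
  have hTfin : {w : P1 | m {v} ≤ m {w}}.Finite := by
    by_contra hinf
    have hinf' : {w : P1 | m {v} ≤ m {w}}.Infinite := hinf
    obtain ⟨n, hn⟩ := ENNReal.exists_nat_gt (by simp [hv0] : (m {v})⁻¹ ≠ ⊤)
    obtain ⟨F, hFsub, hFcard⟩ := hinf'.exists_subset_card_eq (n + 1)
    have hFm : m (↑F : Set P1) = ∑ w ∈ F, m {w} := by
      rw [show (↑F : Set P1) = ⋃ w ∈ F, {w} by ext x; simp]
      exact measure_biUnion_finset
        (fun a _ b _ hab => by simp [Set.disjoint_singleton, hab])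
        (fun w _ => measurableSet_singleton w)
    have hsum : ((n : ENNReal) + 1) * m {v} ≤ m (↑F : Set P1) := by
      rw [hFm]
      calc ((n : ENNReal) + 1) * m {v} = (F.card : ENNReal) * m {v} := by
            rw [hFcard]; push_cast; ring
        _ = F.card • m {v} := by rw [nsmul_eq_mul]
        _ ≤ ∑ w ∈ F, m {w} := Finset.card_nsmul_le_sum F _ _ fun w hw => hFsub hw
    have hgt : 1 < ((n : ENNReal) + 1) * m {v} := by
      have hinv : (m {v})⁻¹ < (n : ENNReal) + 1 := lt_of_lt_of_le hn le_self_add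
      have := (ENNReal.mul_lt_mul_iff_left hv0 (measure_ne_top m _)).2 hinv
      rwa [ENNReal.inv_mul_cancel hv0 (measure_ne_top m _)] at this
    have : (1 : ENNReal) < 1 :=
      lt_of_lt_of_le (lt_of_lt_of_le hgt hsum) prob_le_one
    exact lt_irrefl _ this
  obtain ⟨w₀, hw₀T, hw₀max⟩ := Set.exists_max_image _ (fun w : P1 => m {w}) hTfin ⟨v, show m {v} ≤ m {v} from le_refl _⟩
  have hw₀T' : m {v} ≤ m {w₀} := hw₀T
  have hw₀α : m {w₀} = α := by
    refine le_antisymm (hle w₀) (iSup_le fun u => ?_)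
    by_cases hu : m {v} ≤ m {u}
    · exact hw₀max u hu
    · exact le_trans (le_of_not_ge hu) hw₀T'
  have hαtop : α ≠ ⊤ := by rw [← hw₀α]; exact measure_ne_top m _
  set S : Set P1 := {w | m {w} = α} with hSdef
  have hSsub : S ⊆ {w : P1 | m {v} ≤ m {w}} := by
    intro w hw
    have : m {w} = α := hw
    rw [Set.mem_setOf_eq, this]
    exact hle v
  have hSfin : S.Finite := hTfin.subset hSsub
  have hSne : S.Nonempty := ⟨w₀, hw₀α⟩
  have hstep : ∀ w ∈ S, ∀ M ∈ msupp ν, projAct M⁻¹ w ∈ S := by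
    intro w hw
    have hwα : m {w} = α := hw
    have hGle : ∀ M : SL2, m {x | projAct M x = w} ≤ α := by
      intro M
      rw [hsetinv w M]
      exact hle _
    have hintα : ∫⁻ M, m {x | projAct M x = w} ∂ν = α := by rw [← key w, hwα]
    have hsub0 : ∫⁻ M, (α - m {x | projAct M x = w}) ∂ν = 0 := by
      rw [lintegral_sub (hGmeas w) (by rw [hintα]; exact hαtop)
        (Filter.Eventually.of_forall hGle)]
      rw [lintegral_const, measure_univ, mul_one, hintα, tsub_self]
    have hae := (lintegral_eq_zero_iff (measurable_const.sub (hGmeas w))).1 hsub0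
    have hae2 : ∀ᵐ M ∂ν, projAct M⁻¹ w ∈ S := by
      filter_upwards [hae] with M hM
      have hM0 : α - m {x | projAct M x = w} = 0 := hM
      have hGα : m {x | projAct M x = w} = α :=
        le_antisymm (hGle M) (tsub_eq_zero_iff_le.1 hM0)
      show m {projAct M⁻¹ w} = α
      rw [← hsetinv w M]
      exact hGα
    intro M hMsupp
    by_contra hnot
    have hclosed : IsClosed {M : SL2 | projAct M⁻¹ w ∈ S} :=
      (hSfin.isClosed.preimage (cont_projAct_left w)).preimage cont_inv_sl2
    exact hMsupp _ (hclosed.isOpen_compl.mem_nhds hnot) (ae_iff.1 hae2)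
  have hsuppH : msupp ν ⊆ (Hsub S : Set SL2) := by
    intro M hM
    have hmaps : Set.MapsTo (fun u => projAct M⁻¹ u) S S := fun u hu => hstep u hu M hM
    have hinjOn : Set.InjOn (fun u => projAct M⁻¹ u) S := by
      intro a _ b _ hab
      have := congrArg (projAct M) hab
      simpa [projAct_inv_right] using this
    have hbij := (hSfin.injOn_iff_bijOn_of_mapsTo hmaps).1 hinjOn
    refine ⟨?_, fun u hu => hmaps hu⟩
    intro u hu
    obtain ⟨u', hu', huu'⟩ := hbij.surjOn hu
    have : projAct M u = u' := by
      rw [← huu']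
      simp only []
      rw [projAct_inv_right]
    rw [this]
    exact hu'
  have hGH : Gnu ν ⊆ (Hsub S : Set SL2) := by
    have h1 : (Subgroup.closure (msupp ν) : Set SL2) ⊆ (Hsub S : Set SL2) :=
      (Subgroup.closure_le (Hsub S)).2 hsuppH
    exact closure_minimal h1 (Hsub_isClosed S hSfin)
  refine hinv ⟨S, hSfin, hSne, fun M hMG => ?_⟩
  obtain ⟨hM1, hM2⟩ := hGH hMG
  apply Set.Subset.antisymm
  · rintro _ ⟨u, hu, rfl⟩
    exact hM1 u hu
  · intro u hu
    exact ⟨projAct M⁻¹ u, hM2 u hu, projAct_inv_right M u⟩
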